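/- If x = j/2^N ∈ [0,1) is a dyadic rational and 0 < a < 1/2, then the right-hand derivative of L_a at x equals 0. -/

import Mathlib

open Topology Filter Set

/-- The de Rham functional equation characterizing Lebesgue's singular function `L_a`
on `[0,1]`, together with continuity. -/
def deRham (a : ℝ) (L : ℝ → ℝ) : Prop :=
  ContinuousOn L (Set.Icc 0 1) ∧
  (∀ x ∈ Set.Icc (0:ℝ) (1/2), L x = a * L (2*x)) ∧
  (∀ x ∈ Set.Icc (1/2:ℝ) 1, L x = (1-a) * L (2*x - 1) + a)


section aux
variable {a : ℝ} {L : ℝ → ℝ}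

lemma dR_L0 (ha : a < 1/2) (hL : deRham a L) : L 0 = 0 := by
  have h0 : L 0 = a * L 0 := by
    have := hL.2.1 0 ⟨le_rfl, by norm_num⟩
    simpa using this
  have h1 : (1 - a) * L 0 = 0 := by linear_combination h0
  rcases mul_eq_zero.mp h1 with h | h
  · linarith
  · exact h

lemma dR_L1 (ha0 : 0 < a) (hL : deRham a L) : L 1 = 1 := by
  have h0 : L 1 = (1-a) * L 1 + a := by
    have := hL.2.2 1 ⟨by norm_num, le_rfl⟩
    norm_num at this
    linarith [this]
  have h1 : a * (L 1 - 1) = 0 := by linear_combination h0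
  rcases mul_eq_zero.mp h1 with h | h
  · linarith
  · linarith

lemma dR_half (hL : deRham a L) (k n : ℕ) (hk : k ≤ 2^n) :
    L ((k:ℝ)/2^(n+1)) = a * L ((k:ℝ)/2^n) := by
  have hk' : (k:ℝ) ≤ 2^n := by exact_mod_cast hk
  have hmem : (k:ℝ)/2^(n+1) ∈ Set.Icc (0:ℝ) (1/2) := by
    constructor
    · positivity
    · rw [div_le_iff₀ (by positivity)]
      rw [pow_succ]
      nlinarith
  have h := hL.2.1 _ hmem
  rw [h]
  congr 1
  rw [pow_succ]
  field_simp

lemma dR_half2 (hL : deRham a L) (k n : ℕ) (h1 : 2^n ≤ k) (h2 : k ≤ 2^(n+1)) :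
    L ((k:ℝ)/2^(n+1)) = (1-a) * L (((k - 2^n : ℕ):ℝ)/2^n) + a := by
  have hk1 : (2:ℝ)^n ≤ (k:ℝ) := by exact_mod_cast h1
  have hk2 : (k:ℝ) ≤ 2^(n+1) := by exact_mod_cast h2
  have hmem : (k:ℝ)/2^(n+1) ∈ Set.Icc (1/2:ℝ) 1 := by
    constructor
    · rw [le_div_iff₀ (by positivity)]
      rw [pow_succ]
      nlinarith
    · rw [div_le_one (by positivity)]
      exact hk2
  have h := hL.2.2 _ hmem
  rw [h]
  congr 2
  push_cast [h1]
  rw [pow_succ]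
  field_simp

end aux

section aux2
variable {a : ℝ} {L : ℝ → ℝ}

/-- increment of `L` over the dyadic interval `[k/2^n, (k+1)/2^n]`. -/
noncomputable def Dd (L : ℝ → ℝ) (k n : ℕ) : ℝ :=
  L (((k:ℝ)+1)/2^n) - L ((k:ℝ)/2^n)

lemma dR_R1 (hL : deRham a L) (k n : ℕ) (hk : k + 1 ≤ 2^n) :
    Dd L k (n+1) = a * Dd L k n := by
  have e1 := dR_half (a := a) hL k n (by omega)
  have e2 := dR_half (a := a) hL (k+1) n hk
  push_cast at e2
  unfold Dd
  rw [e1, e2]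
  ring

lemma dR_R2 (hL : deRham a L) (k n : ℕ) (h1 : 2^n ≤ k) (h2 : k + 1 ≤ 2^(n+1)) :
    Dd L k (n+1) = (1-a) * Dd L (k - 2^n) n := by
  have e1 := dR_half2 (a := a) hL k n h1 (by omega)
  have e2 := dR_half2 (a := a) hL (k+1) n (by omega) h2
  have hsub : (k + 1) - 2^n = (k - 2^n) + 1 := by omega
  rw [hsub] at e2
  push_cast at e2
  unfold Dd
  rw [e1, e2]
  ring

lemma dR_scale (ha0 : 0 < a) (ha : a < 1/2) (hL : deRham a L) :
    ∀ N m j : ℕ, j + 1 ≤ 2^N → Dd L (j * 2^m) (N + m) = a^m * Dd L j N := by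
  intro N
  induction N with
  | zero =>
    intro m j hj
    have hj0 : j = 0 := by omega
    subst hj0
    simp only [Nat.zero_add, zero_mul, pow_zero]
    induction m with
    | zero => simp
    | succ m ih =>
      have := dR_R1 (a := a) hL 0 m (Nat.one_le_two_pow)
      rw [this, ih]
      ring
  | succ N IH =>
    intro m j hj
    rcases le_or_gt (j+1) (2^N) with hjc | hjc
    · -- j < 2^N : first functional branch
      have hk1 : j * 2^m + 1 ≤ 2^(N+m) := by
        have e1 : (j+1) * 2^m ≤ 2^N * 2^m := Nat.mul_le_mul_right _ hjc
        have e2 : 2^N * 2^m = 2^(N+m) := (pow_add 2 N m).symm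
        have e3 : 1 ≤ 2^m := Nat.one_le_two_pow
        have e4 : (j+1) * 2^m = j * 2^m + 2^m := by ring
        omega
      have hstep : Dd L (j * 2^m) (N + m + 1) = a * Dd L (j * 2^m) (N + m) :=
        dR_R1 hL _ _ hk1
      have hNm : N + 1 + m = N + m + 1 := by omega
      rw [hNm, hstep, IH m j hjc, dR_R1 hL j N hjc]
      ring
    · -- 2^N ≤ j
      have hjN : 2^N ≤ j := by omega
      have h2N : 2^(N+1) = 2 * 2^N := by rw [pow_succ]; ring
      have hk0 : 2^(N+m) ≤ j * 2^m := by
        have := Nat.mul_le_mul_right (2^m) hjN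
        calc 2^(N+m) = 2^N * 2^m := pow_add 2 N m
        _ ≤ j * 2^m := this
      have hk1 : j * 2^m + 1 ≤ 2^(N+m+1) := by
        have e1 : (j+1) * 2^m ≤ 2^(N+1) * 2^m := Nat.mul_le_mul_right _ hj
        have e2 : 2^(N+1) * 2^m = 2^(N+m+1) := by rw [← pow_add]; congr 1; omega
        have e3 : 1 ≤ 2^m := Nat.one_le_two_pow
        have e4 : (j+1) * 2^m = j * 2^m + 2^m := by ring
        omega
      have hsub : j * 2^m - 2^(N+m) = (j - 2^N) * 2^m := by
        have : (j - 2^N) * 2^m = j * 2^m - 2^N * 2^m := Nat.sub_mul j (2^N) (2^m)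
        rw [this, pow_add]
      have hNm : N + 1 + m = N + m + 1 := by omega
      have hj' : (j - 2^N) + 1 ≤ 2^N := by omega
      rw [hNm, dR_R2 hL _ _ hk0 hk1, hsub, IH m (j - 2^N) hj',
        dR_R2 hL j N hjN (by omega)]
      ring

end aux2

section aux3
variable {a : ℝ} {L : ℝ → ℝ}

lemma dR_selfSim (ha0 : 0 < a) (ha : a < 1/2) (hL : deRham a L) :
    ∀ n k : ℕ, k + 1 ≤ 2^n → ∀ t ∈ Icc ((k:ℝ)/2^n) (((k:ℝ)+1)/2^n),
      L t = L ((k:ℝ)/2^n) + (Dd L k n) * L (2^n * t - k) := by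
  intro n
  induction n with
  | zero =>
    intro k hk t ht
    have hk0 : k = 0 := by omega
    subst hk0
    simp only [Nat.cast_zero, pow_zero, div_one, zero_add] at ht ⊢
    unfold Dd
    simp only [Nat.cast_zero, pow_zero, div_one, zero_add, one_mul, sub_zero]
    rw [dR_L0 ha hL, dR_L1 ha0 hL]
    ring
  | succ n IH =>
    intro k hk t ht
    obtain ⟨ht1, ht2⟩ := ht
    rcases le_or_gt (k+1) (2^n) with hkc | hkc
    · -- left half
      have hkR : ((k:ℝ)+1) ≤ 2^n := by exact_mod_cast hkc
      have hpos : (0:ℝ) < 2^(n+1) := by positivity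
      have htmem : t ∈ Set.Icc (0:ℝ) (1/2) := by
        constructor
        · have : (0:ℝ) ≤ (k:ℝ)/2^(n+1) := by positivity
          linarith
        · have : ((k:ℝ)+1)/2^(n+1) ≤ 1/2 := by
            rw [div_le_div_iff₀ hpos (by norm_num), pow_succ]
            nlinarith
          linarith
      have heq := hL.2.1 t htmem
      have h2t : 2*t ∈ Icc ((k:ℝ)/2^n) (((k:ℝ)+1)/2^n) := by
        constructor
        · rw [div_le_iff₀ (by positivity)]
          rw [div_le_iff₀ hpos, pow_succ] at ht1
          nlinarith
        · rw [le_div_iff₀ (by positivity)]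
          rw [le_div_iff₀ hpos, pow_succ] at ht2
          nlinarith
      have hIH := IH k hkc (2*t) h2t
      have e1 := dR_half (a := a) hL k n (by omega)
      have e2 := dR_half (a := a) hL (k+1) n hkc
      push_cast at e2
      have harg : (2:ℝ)^(n+1) * t - k = 2^n * (2*t) - k := by ring
      unfold Dd at hIH ⊢
      rw [harg, heq, hIH, e1, e2]
      ring
    · -- right half
      have hkN : 2^n ≤ k := by omega
      have hkR1 : (2:ℝ)^n ≤ (k:ℝ) := by exact_mod_cast hkN
      have hkR2 : ((k:ℝ)+1) ≤ 2^(n+1) := by exact_mod_cast hk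
      have hpos : (0:ℝ) < 2^(n+1) := by positivity
      have htmem : t ∈ Set.Icc (1/2:ℝ) 1 := by
        constructor
        · have : (1/2:ℝ) ≤ (k:ℝ)/2^(n+1) := by
            rw [div_le_div_iff₀ (by norm_num) hpos, pow_succ]
            nlinarith
          linarith
        · have : ((k:ℝ)+1)/2^(n+1) ≤ 1 := by
            rw [div_le_one hpos]
            exact hkR2
          linarith
      have heq := hL.2.2 t htmem
      have hcast : ((k - 2^n : ℕ) : ℝ) = (k:ℝ) - 2^n := by
        push_cast [hkN]; ring
      have h2t : 2*t - 1 ∈ Icc (((k - 2^n : ℕ):ℝ)/2^n) ((((k - 2^n : ℕ):ℝ)+1)/2^n) := by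
        rw [hcast]
        constructor
        · rw [div_le_iff₀ (by positivity)]
          rw [div_le_iff₀ hpos, pow_succ] at ht1
          nlinarith
        · rw [le_div_iff₀ (by positivity)]
          rw [le_div_iff₀ hpos, pow_succ] at ht2
          nlinarith
      have hIH := IH (k - 2^n) (by omega) (2*t - 1) h2t
      have e1 := dR_half2 (a := a) hL k n hkN (by omega)
      have e2 := dR_half2 (a := a) hL (k+1) n (by omega) (by omega)
      have hsub : (k + 1) - 2^n = (k - 2^n) + 1 := by omega
      rw [hsub] at e2
      push_cast at e2
      have harg : (2:ℝ)^n * (2*t - 1) - ((k - 2^n : ℕ):ℝ) = 2^(n+1) * t - k := by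
        rw [hcast, pow_succ]; ring
      unfold Dd at hIH ⊢
      rw [harg] at hIH
      rw [heq, hIH, e1, e2]
      ring
  end aux3

theorem right_deriv_zero_at_dyadic (a : ℝ) (ha0 : 0 < a) (ha : a < 1/2)
    (L : ℝ → ℝ) (hL : deRham a L)
    (x : ℝ) (j N : ℕ) (hx : x = (j : ℝ) / 2 ^ N) (hx1 : x < 1) :
    Tendsto (fun h : ℝ => (L (x+h) - L x) / h) (𝓝[>] 0) (𝓝 0) := by
  obtain ⟨C, hC⟩ := (isCompact_Icc : IsCompact (Icc (0:ℝ) 1)).exists_bound_of_continuousOn hL.1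
  have hC0 : 0 ≤ C := le_trans (norm_nonneg _) (hC 0 (by norm_num))
  have hj : j + 1 ≤ 2^N := by
    have : (j:ℝ) < 2^N := by
      rw [hx, div_lt_one (by positivity)] at hx1
      exact hx1
    have : j < 2^N := by exact_mod_cast this
    omega
  set K : ℝ := |Dd L j N| * C with hK
  have hK0 : 0 ≤ K := mul_nonneg (abs_nonneg _) hC0
  -- key estimate
  have key : ∀ n, N ≤ n → ∀ h : ℝ, 0 < h → h ≤ (1/2)^n →
      |L (x+h) - L x| ≤ a^(n-N) * K := by
    intro n hn h hh1 hh2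
    set k : ℕ := j * 2^(n-N) with hkdef
    have h2pow : (2:ℝ)^N * 2^(n-N) = 2^n := by
      rw [← pow_add]; congr 1; omega
    have hxk : x = (k:ℝ)/2^n := by
      rw [hx, hkdef]
      push_cast
      rw [← h2pow]
      field_simp
    have hk1 : k + 1 ≤ 2^n := by
      have e1 : (j+1) * 2^(n-N) ≤ 2^N * 2^(n-N) := Nat.mul_le_mul_right _ hj
      have e2 : 2^N * 2^(n-N) = 2^n := by rw [← pow_add]; congr 1; omega
      have e3 : 1 ≤ 2^(n-N) := Nat.one_le_two_pow
      have e4 : (j+1) * 2^(n-N) = j * 2^(n-N) + 2^(n-N) := by ring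
      omega
    have hmem : x + h ∈ Icc ((k:ℝ)/2^n) (((k:ℝ)+1)/2^n) := by
      constructor
      · rw [← hxk]; linarith
      · have he : ((k:ℝ)+1)/2^n = (k:ℝ)/2^n + 1/2^n := by ring
        rw [he, ← hxk]
        have h12 : (1/2:ℝ)^n = 1/2^n := by rw [div_pow]; norm_num
        linarith [h12 ▸ hh2]
    have hsim := dR_selfSim ha0 ha hL n k hk1 (x+h) hmem
    have hs : 2^n * (x+h) - (k:ℝ) = 2^n * h := by
      rw [hxk]; field_simp; ring
    have hsmem : (2:ℝ)^n * (x+h) - (k:ℝ) ∈ Icc (0:ℝ) 1 := by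
      rw [hs]
      constructor
      · positivity
      · have h12 : (1/2:ℝ)^n = 1/2^n := by rw [div_pow]; norm_num
        rw [h12] at hh2
        rw [← le_div_iff₀' (by positivity)]
        exact hh2
    have hDk : Dd L k n = a^(n-N) * Dd L j N := by
      have hsc := dR_scale ha0 ha hL N (n-N) j hj
      have hNn : N + (n - N) = n := by omega
      rw [hNn] at hsc
      exact hsc
    have hdiff : L (x+h) - L x = Dd L k n * L (2^n * (x+h) - k) := by
      rw [hsim, ← hxk]
      ring
    rw [hdiff, hDk, abs_mul, abs_mul, abs_of_pos (pow_pos ha0 _)]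
    rw [hK, mul_assoc]
    have hb : |L (2^n * (x+h) - (k:ℝ))| ≤ C := by
      simpa [Real.norm_eq_abs] using hC _ hsmem
    exact mul_le_mul_of_nonneg_left
      (mul_le_mul_of_nonneg_left hb (abs_nonneg _)) (le_of_lt (pow_pos ha0 _))
  -- the ε-δ argument
  have haN : (0:ℝ) < a^N := pow_pos ha0 N
  set B : ℝ := 2 * K / a^N with hB
  have hB0 : 0 ≤ B := by positivity
  have htend : Tendsto (fun n : ℕ => B * (2*a)^n) atTop (𝓝 0) := by
    have h1 : Tendsto (fun n : ℕ => (2*a)^n) atTop (𝓝 0) :=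
      tendsto_pow_atTop_nhds_zero_of_lt_one (by linarith) (by linarith)
    simpa using h1.const_mul B
  rw [Metric.tendsto_nhdsWithin_nhds]
  intro ε hε
  obtain ⟨n0, hn0⟩ := (Metric.tendsto_atTop.mp htend) ε hε
  set m : ℕ := max N n0 with hm
  refine ⟨(1/2:ℝ)^(m+1), by positivity, ?_⟩
  intro h hhmem hhd
  have hh0 : 0 < h := hhmem
  have hhlt : h < (1/2:ℝ)^(m+1) := by
    rw [Real.dist_eq, sub_zero, abs_of_pos hh0] at hhd
    exact hhd
  have hp : ∃ n : ℕ, (1/2:ℝ)^(n+1) < h := by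
    obtain ⟨n, hn⟩ := exists_pow_lt_of_lt_one hh0 (by norm_num : (1/2:ℝ) < 1)
    refine ⟨n, lt_of_le_of_lt ?_ hn⟩
    rw [pow_succ]
    nlinarith [pow_pos (by norm_num : (0:ℝ) < 1/2) n]
  set n : ℕ := Nat.find hp with hndef
  have hn1 : (1/2:ℝ)^(n+1) < h := Nat.find_spec hp
  have hnm : m < n := by
    by_contra hcon
    push_neg at hcon
    have : (1/2:ℝ)^(m+1) ≤ (1/2)^(n+1) :=
      pow_le_pow_of_le_one (by norm_num) (by norm_num) (by omega)
    linarith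
  have hn2 : h ≤ (1/2:ℝ)^n := by
    have hne : 1 ≤ n := by omega
    have hmin := Nat.find_min hp (m := n - 1) (by omega)
    have hsub : n - 1 + 1 = n := by omega
    rw [hsub] at hmin
    push_neg at hmin
    exact hmin
  have hNn : N ≤ n := by omega
  have hkey := key n hNn h hh0 hn2
  have hfin : |(L (x+h) - L x) / h| ≤ B * (2*a)^n := by
    rw [abs_div, abs_of_pos hh0]
    rw [div_le_iff₀ hh0]
    have h2n : (1:ℝ) ≤ 2^(n+1) * h := by
      have he : ((1:ℝ)/2)^(n+1) * 2^(n+1) = 1 := by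
        rw [div_pow]
        field_simp
        exact one_pow _
      nlinarith [pow_pos (by norm_num : (0:ℝ) < 2) (n+1)]
    have heq : B * (2*a)^n = a^(n-N) * K * 2^(n+1) := by
      rw [hB, mul_pow]
      rw [pow_sub₀ a (ne_of_gt ha0) hNn]
      rw [pow_succ]
      field_simp
    calc |L (x+h) - L x| ≤ a^(n-N) * K := hkey
      _ = a^(n-N) * K * 1 := by ring
      _ ≤ a^(n-N) * K * (2^(n+1) * h) := by
          have hak : 0 ≤ a^(n-N) * K := mul_nonneg (le_of_lt (pow_pos ha0 _)) hK0
          exact mul_le_mul_of_nonneg_left h2n hak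
      _ = B * (2*a)^n * h := by rw [heq]; ring
  have hlast : B * (2*a)^n < ε := by
    have hd := hn0 n (by omega)
    rw [Real.dist_eq, sub_zero] at hd
    have habs : 0 ≤ B * (2*a)^n :=
      mul_nonneg hB0 (pow_nonneg (by linarith) n)
    rwa [abs_of_nonneg habs] at hd
  rw [Real.dist_eq, sub_zero]
  exact lt_of_le_of_lt hfin hlast
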